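/- Let d > 1 be an odd integer with gcd(d,ab) = 1. Then d is (T,k)-good with respect to (a,b) if and only if there exists a positive integer α such that: (1) ν₂(ord_p(a·b⁻¹)) = α for every prime p dividing d; (2) T ≡ 2^(α−1) (mod 2^min(α,ν₂(k))); and (3) gcd(k/2^(ν₂(k)), L/2^α) divides T, where L is the least common multiple of ord_{p^e}(a·b⁻¹) over the maximal prime powers p^e dividing d. -/

import Mathlib

lemma aux_sq_root (p : ℕ) (hp : p.Prime) (hp2 : p ≠ 2) (e : ℕ) (c : ℤ)
    (h : ((p:ℤ)^e) ∣ c^2 - 1) : ((p:ℤ)^e) ∣ c - 1 ∨ ((p:ℤ)^e) ∣ c + 1 := by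
  have hq : Prime (p:ℤ) := Nat.prime_iff_prime_int.mp hp
  have hfac : c^2 - 1 = (c-1)*(c+1) := by ring
  rw [hfac] at h
  by_cases hd : (p:ℤ) ∣ c + 1
  · right
    have hnd : ¬ (p:ℤ) ∣ c - 1 := by
      intro hd'
      have h2' : (p:ℤ) ∣ 2 := by
        have := dvd_sub hd hd'
        simpa using this
      have h2 : p ∣ 2 := by exact_mod_cast h2'
      exact hp2 ((Nat.prime_dvd_prime_iff_eq hp Nat.prime_two).mp h2)
    have hcop : IsCoprime ((p:ℤ)^e) (c-1) :=
      (IsCoprime.pow_left ((hq.coprime_iff_not_dvd).mpr hnd))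
    exact hcop.dvd_of_dvd_mul_left h
  · left
    have hcop : IsCoprime ((p:ℤ)^e) (c+1) :=
      (IsCoprime.pow_left ((hq.coprime_iff_not_dvd).mpr hd))
    exact hcop.dvd_of_dvd_mul_right h


/-- if p ∣ c - 1 then p^e ∣ c^(p^(e-1)) - 1, for e ≥ 1 -/
lemma aux_lift (p : ℕ) (hp : p.Prime) (c : ℤ) (h : (p:ℤ) ∣ c - 1) (e : ℕ) (he : 1 ≤ e) :
    ((p:ℤ)^e) ∣ c^(p^(e-1)) - 1 := by
  induction e with
  | zero => omega
  | succ e ih =>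
    rcases Nat.eq_or_lt_of_le he with h1 | h1
    · simpa [← h1] using h
    · have he' : 1 ≤ e := by omega
      have ihe := ih he'
      set y : ℤ := c ^ (p ^ (e-1)) with hy
      have hye : 0 < e := he'
      have hy1 : (p:ℤ) ∣ y - 1 :=
        dvd_trans (dvd_pow_self (p:ℤ) (by positivity : (0:ℕ) < e).ne') ihe
      -- y^p - 1 = (∑ i in range p, y^i) * (y - 1)
      have hgeom : (∑ i ∈ Finset.range p, y ^ i) * (y - 1) = y ^ p - 1 := geom_sum_mul y p
      have hsum : (p:ℤ) ∣ (∑ i ∈ Finset.range p, y ^ i) := by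
        have : ((∑ i ∈ Finset.range p, y ^ i : ℤ) : ZMod p) = 0 := by
          push_cast
          have hcast : (y : ZMod p) = 1 := by
            have := (ZMod.intCast_zmod_eq_zero_iff_dvd (y - 1) p).mpr hy1
            push_cast at this
            linear_combination this
          rw [hcast]
          simp [ZMod.natCast_self]
        exact_mod_cast (ZMod.intCast_zmod_eq_zero_iff_dvd _ p).mp this
      have hdvd : ((p:ℤ)^(e+1)) ∣ (∑ i ∈ Finset.range p, y ^ i) * (y - 1) := by
        rw [pow_succ, mul_comm ((p:ℤ)^e) (p:ℤ)]
        exact mul_dvd_mul hsum ihe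
      rw [hgeom] at hdvd
      have hee : e - 1 + 1 = e := by omega
      have : y ^ p = c ^ (p ^ e) := by
        rw [hy, ← pow_mul, ← pow_succ, hee]
      rw [this] at hdvd
      simpa using hdvd



lemma aux_zmod_sq (p e : ℕ) (hp : p.Prime) (hp2 : p ≠ 2) (y : ZMod (p^e))
    (h : y^2 = 1) : y = 1 ∨ y = -1 := by
  haveI : NeZero (p^e) := ⟨pow_ne_zero _ hp.ne_zero⟩
  set c : ℤ := (y.val : ℤ) with hc
  have hcy : ((c : ℤ) : ZMod (p^e)) = y := by
    rw [hc]; push_cast; exact ZMod.natCast_rightInverse y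
  have hdvd : ((p^e : ℕ) : ℤ) ∣ c^2 - 1 := by
    rw [← ZMod.intCast_zmod_eq_zero_iff_dvd]
    push_cast
    rw [hcy, h]; ring
  have hdvd' : ((p:ℤ)^e) ∣ c^2 - 1 := by push_cast at hdvd; exact hdvd
  rcases aux_sq_root p hp hp2 e c hdvd' with h1 | h1
  · left
    have : ((c - 1 : ℤ) : ZMod (p^e)) = 0 := by
      rw [ZMod.intCast_zmod_eq_zero_iff_dvd]; push_cast; exact h1
    push_cast at this
    rw [hcy] at this
    linear_combination this
  · right
    have : ((c + 1 : ℤ) : ZMod (p^e)) = 0 := by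
      rw [ZMod.intCast_zmod_eq_zero_iff_dvd]; push_cast; exact h1
    push_cast at this
    rw [hcy] at this
    linear_combination this

lemma aux_pow_neg_one (p e : ℕ) (hp : p.Prime) (hp2 : p ≠ 2) (he : 0 < e)
    (x : ZMod (p^e)) (hx : IsUnit x) (n : ℕ) :
    x ^ n = -1 ↔ (orderOf x ∣ 2*n ∧ ¬ orderOf x ∣ n) := by
  haveI : Fact (2 < p^e) := ⟨by
    have h3 : 3 ≤ p := by
      rcases hp.two_le.lt_or_eq with h | h
      · omega
      · omega
    calc 2 < 3 := by norm_num
    _ ≤ p := h3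
    _ = p^1 := (pow_one p).symm
    _ ≤ p^e := Nat.pow_le_pow_right hp.pos he⟩
  have hne : (-1 : ZMod (p^e)) ≠ 1 := ZMod.neg_one_ne_one
  constructor
  · intro h
    refine ⟨orderOf_dvd_of_pow_eq_one ?_, ?_⟩
    · rw [mul_comm, pow_mul, h]; ring
    · intro hdvd
      have := orderOf_dvd_iff_pow_eq_one.mp hdvd
      rw [h] at this
      exact hne this
  · rintro ⟨h1, h2⟩
    have hsq : (x^n)^2 = 1 := by
      rw [← pow_mul, mul_comm]
      exact orderOf_dvd_iff_pow_eq_one.mp h1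
    rcases aux_zmod_sq p e hp hp2 (x^n) hsq with h | h
    · exact absurd (orderOf_dvd_iff_pow_eq_one.mpr h) h2
    · exact h



lemma aux_isUnit (m : ℕ) (b : ℤ) (h : IsCoprime (m:ℤ) b) : IsUnit ((b : ZMod m)) := by
  obtain ⟨u, v, huv⟩ := h
  apply IsUnit.of_mul_eq_one ((v : ℤ) : ZMod m)
  have : ((u * m + v * b : ℤ) : ZMod m) = 1 := by rw [huv]; norm_num
  push_cast at this
  rw [ZMod.natCast_self] at this
  calc (b : ZMod m) * (v:ℤ) = (u:ℤ) * 0 + (v:ℤ) * (b:ℤ) := by push_cast; ring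
  _ = 1 := this

lemma aux_order_pos (m : ℕ) (hm : 1 < m) (x : ZMod m) (hx : IsUnit x) : 0 < orderOf x := by
  haveI : NeZero m := ⟨by omega⟩
  obtain ⟨u, rfl⟩ := hx
  rw [orderOf_units]
  exact orderOf_pos u

lemma aux_castHom_x (p e : ℕ) (hp : p.Prime) (he : 0 < e) (a b : ℤ)
    (hub : IsUnit ((b : ZMod (p^e)))) :
    (ZMod.castHom (dvd_pow_self p he.ne') (ZMod p))
        ((a : ZMod (p^e)) * (b : ZMod (p^e))⁻¹) = (a : ZMod p) * (b : ZMod p)⁻¹ := by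
  set f := ZMod.castHom (dvd_pow_self p he.ne') (ZMod p) with hf
  have hub' : IsUnit ((b : ZMod p)) := by
    have := hub.map f
    rwa [map_intCast] at this
  have h1 : (b : ZMod p) * f ((b : ZMod (p^e))⁻¹) = 1 := by
    have := congrArg f (ZMod.mul_inv_of_unit _ hub)
    rwa [map_mul, map_intCast, map_one] at this
  have h2 : (b : ZMod p) * (b : ZMod p)⁻¹ = 1 := ZMod.mul_inv_of_unit _ hub'
  have hinv : f ((b : ZMod (p^e))⁻¹) = (b : ZMod p)⁻¹ :=
    hub'.mul_left_cancel (h1.trans h2.symm)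
  rw [map_mul, map_intCast, hinv]

lemma aux_v2_order (p e : ℕ) (hp : p.Prime) (hp2 : p ≠ 2) (he : 0 < e) (a b : ℤ)
    (hua : IsUnit ((a : ZMod (p^e)))) (hub : IsUnit ((b : ZMod (p^e)))) :
    (orderOf ((a : ZMod (p^e)) * (b : ZMod (p^e))⁻¹)).factorization 2
      = (orderOf ((a : ZMod p) * (b : ZMod p)⁻¹)).factorization 2 := by
  haveI : NeZero (p^e) := ⟨pow_ne_zero _ hp.ne_zero⟩
  set f := ZMod.castHom (dvd_pow_self p he.ne') (ZMod p) with hf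
  set x : ZMod (p^e) := (a : ZMod (p^e)) * (b : ZMod (p^e))⁻¹ with hx
  set y : ZMod p := (a : ZMod p) * (b : ZMod p)⁻¹ with hy
  have hfx : f x = y := aux_castHom_x p e hp he a b hub
  set t := orderOf y with ht
  set Tt := orderOf x with hTt
  -- x is a unit
  have hxu : IsUnit x := hua.mul (IsUnit.of_mul_eq_one _ (ZMod.inv_mul_of_unit _ hub))
  have hyu : IsUnit y := by
    have := hxu.map f
    rwa [hfx] at this
  have hm1 : 1 < p ^ e := by
    calc 1 < p := hp.one_lt
    _ = p^1 := (pow_one p).symm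
    _ ≤ p^e := Nat.pow_le_pow_right hp.pos he
  have hTpos : 0 < Tt := aux_order_pos _ hm1 x hxu
  have htpos : 0 < t := aux_order_pos _ hp.one_lt y hyu
  -- t ∣ Tt
  have hdvd1 : t ∣ Tt := by
    have := orderOf_map_dvd f.toMonoidHom x
    simpa [hfx] using this
  -- Tt ∣ t * p^(e-1)
  have hdvd2 : Tt ∣ t * p^(e-1) := by
    set c : ℕ := x.val with hc
    have hcx : ((c : ℕ) : ZMod (p^e)) = x := ZMod.natCast_rightInverse x
    have hcy : ((c : ℕ) : ZMod p) = y := by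
      have := congrArg f hcx
      rwa [map_natCast, hfx] at this
    have hyt : ((c:ℤ)^t - 1 : ℤ) = ((c^t - 1 : ℤ)) := by push_cast; ring
    have h1 : (p:ℤ) ∣ (c:ℤ)^t - 1 := by
      rw [← ZMod.intCast_zmod_eq_zero_iff_dvd]
      push_cast
      rw [hcy]
      have : y ^ t = 1 := pow_orderOf_eq_one y
      rw [this]; ring
    have h2 : ((p:ℤ)^e) ∣ ((c:ℤ)^t)^(p^(e-1)) - 1 := aux_lift p hp _ h1 e he
    apply orderOf_dvd_of_pow_eq_one
    have : ((((c:ℤ)^t)^(p^(e-1)) - 1 : ℤ) : ZMod (p^e)) = 0 := by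
      rw [ZMod.intCast_zmod_eq_zero_iff_dvd]
      push_cast
      exact h2
    push_cast at this
    rw [hcx] at this
    calc x ^ (t * p^(e-1)) = (x^t)^(p^(e-1)) := by rw [pow_mul]
    _ = (x^t)^(p^(e-1)) - 0 := by ring
    _ = 1 := by rw [← this]; ring
  -- conclude valuations equal
  have hle1 : t.factorization 2 ≤ Tt.factorization 2 :=
    (Nat.factorization_le_iff_dvd htpos.ne' hTpos.ne').mpr hdvd1 2
  have hle2 : Tt.factorization 2 ≤ (t * p^(e-1)).factorization 2 :=
    (Nat.factorization_le_iff_dvd hTpos.ne' (Nat.mul_pos htpos (pow_pos hp.pos _)).ne').mpr hdvd2 2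
  have heq : (t * p^(e-1)).factorization 2 = t.factorization 2 := by
    rw [Nat.factorization_mul htpos.ne' (pow_pos hp.pos _).ne']
    simp only [Finsupp.coe_add, Pi.add_apply]
    have : (p^(e-1)).factorization 2 = 0 := by
      rw [hp.factorization_pow, Finsupp.single_apply, if_neg (by omega : ¬ p = 2)]
    omega
  omega


lemma aux_key_t (t n : ℕ) (ht : 0 < t) (hn : 0 < n) :
    (t ∣ 2*n ∧ ¬ t ∣ n) ↔
      (t.factorization 2 = n.factorization 2 + 1 ∧ t / 2^(t.factorization 2) ∣ n) := by
  set α := t.factorization 2 with hα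
  set c := n.factorization 2 with hc
  set t' := t / 2^α with ht'
  have htt : 2^α * t' = t := Nat.ordProj_mul_ordCompl_eq_self t 2
  have hodd : ¬ 2 ∣ t' := Nat.not_dvd_ordCompl Nat.prime_two ht.ne'
  have hcop : Nat.Coprime 2 t' := (Nat.Prime.coprime_iff_not_dvd Nat.prime_two).mpr hodd
  have h2n : (2*n) ≠ 0 := by omega
  have hf2n : (2*n).factorization 2 = c + 1 := by
    rw [Nat.factorization_mul (by omega) hn.ne']
    simp only [Finsupp.coe_add, Pi.add_apply]
    rw [Nat.Prime.factorization_self Nat.prime_two]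
    omega
  constructor
  · rintro ⟨h1, h2⟩
    have ht'n : t' ∣ n := by
      have : t' ∣ 2 * n := dvd_trans (Nat.ordCompl_dvd t 2) h1
      exact hcop.symm.dvd_of_dvd_mul_left this
    have hαle : α ≤ c + 1 := by
      have : 2^α ∣ 2*n := dvd_trans (Nat.ordProj_dvd t 2) h1
      have := (Nat.Prime.pow_dvd_iff_le_factorization Nat.prime_two h2n).mp this
      omega
    have hαc : ¬ α ≤ c := by
      intro hle
      apply h2
      rw [← htt]
      refine (Nat.Coprime.pow_left α hcop).mul_dvd_of_dvd_of_dvd ?_ ht'n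
      exact dvd_trans (pow_dvd_pow 2 hle) (Nat.ordProj_dvd n 2)
    exact ⟨by omega, ht'n⟩
  · rintro ⟨h1, h2⟩
    constructor
    · rw [← htt]
      refine (Nat.Coprime.pow_left α hcop).mul_dvd_of_dvd_of_dvd ?_ (h2.mul_left 2)
      · rw [h1, pow_succ, mul_comm (2^c) 2]
        exact Nat.mul_dvd_mul_left 2 (Nat.ordProj_dvd n 2)
    · intro hdvd
      have : 2^α ∣ n := dvd_trans (Nat.ordProj_dvd t 2) hdvd
      have := (Nat.Prime.pow_dvd_iff_le_factorization Nat.prime_two hn.ne').mp this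
      omega

lemma aux_v2_mod (n α : ℕ) (hn : 0 < n) (hα : 0 < α) :
    n.factorization 2 + 1 = α ↔ n % 2^α = 2^(α-1) := by
  obtain ⟨β, rfl⟩ : ∃ β, α = β + 1 := ⟨α - 1, by omega⟩
  simp only [Nat.add_sub_cancel]
  have hsub : 2^β ∣ 2^(β+1) := pow_dvd_pow 2 (by omega)
  have hpow : (2:ℕ)^(β+1) = 2 * 2^β := by ring
  constructor
  · intro h
    have h1 : 2^β ∣ n :=
      dvd_trans (pow_dvd_pow 2 (by omega : β ≤ n.factorization 2)) (Nat.ordProj_dvd n 2)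
    have h2 : ¬ 2^(β+1) ∣ n := by
      intro hd
      have := (Nat.Prime.pow_dvd_iff_le_factorization Nat.prime_two hn.ne').mp hd
      omega
    set r := n % 2^(β+1) with hr
    have hrd : 2^β ∣ r := (Nat.dvd_mod_iff hsub).mpr h1
    have hrne : r ≠ 0 := by
      intro h0
      exact h2 (Nat.dvd_iff_mod_eq_zero.mpr h0)
    have hrlt : r < 2^(β+1) := Nat.mod_lt _ (by positivity)
    obtain ⟨j, hj⟩ := hrd
    have hj2 : j < 2 := by
      by_contra hj2
      push_neg at hj2
      have : 2^β * 2 ≤ 2^β * j := Nat.mul_le_mul_left _ hj2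
      omega
    interval_cases j <;> omega
  · intro h
    have h1 : 2^β ∣ n := by
      have : 2^β ∣ n % 2^(β+1) := by rw [h]
      exact (Nat.dvd_mod_iff hsub).mp this
    have h2 : ¬ 2^(β+1) ∣ n := by
      intro hd
      have h0 : n % 2^(β+1) = 0 := Nat.dvd_iff_mod_eq_zero.mp hd
      have hpos : 0 < (2:ℕ)^β := by positivity
      omega
    have hle : β ≤ n.factorization 2 :=
      (Nat.Prime.pow_dvd_iff_le_factorization Nat.prime_two hn.ne').mp h1
    have hlt : ¬ (β + 1 ≤ n.factorization 2) := by
      intro hle'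
      exact h2 (dvd_trans (pow_dvd_pow 2 hle') (Nat.ordProj_dvd n 2))
    omega


lemma aux_lcm (S : Finset ℕ) (hS : S.Nonempty) (f : ℕ → ℕ) (α : ℕ)
    (hf : ∀ p ∈ S, 0 < f p) (hv : ∀ p ∈ S, (f p).factorization 2 = α) :
    0 < S.lcm f ∧ (S.lcm f).factorization 2 = α ∧
      ∀ p ∈ S, (f p)/2^α ∣ (S.lcm f)/2^α := by
  set L := S.lcm f with hL
  set M := 2^α * ∏ p ∈ S, (f p / 2^α) with hM
  have hsplit : ∀ p ∈ S, 2^α * (f p / 2^α) = f p := by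
    intro p hp
    have := Nat.ordProj_mul_ordCompl_eq_self (f p) 2
    rwa [hv p hp] at this
  have hquotpos : ∀ p ∈ S, 0 < f p / 2^α := by
    intro p hp
    have h1 := hsplit p hp
    have hfp := hf p hp
    by_contra h0
    push_neg at h0
    interval_cases h : (f p / 2^α)
    omega
  have hquotodd : ∀ p ∈ S, ¬ 2 ∣ (f p / 2^α) := by
    intro p hp
    have := Nat.not_dvd_ordCompl Nat.prime_two (hf p hp).ne'
    rwa [hv p hp] at this
  have hprodpos : 0 < ∏ p ∈ S, (f p / 2^α) := Finset.prod_pos hquotpos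
  have hMpos : 0 < M := by positivity
  have hLM : L ∣ M := by
    apply Finset.lcm_dvd
    intro p hp
    rw [← hsplit p hp]
    exact Nat.mul_dvd_mul_left _ (Finset.dvd_prod_of_mem _ hp)
  have hLpos : 0 < L := by
    rcases Nat.eq_zero_or_pos L with h0 | h
    · rw [h0] at hLM
      exact absurd (Nat.eq_zero_of_zero_dvd hLM) hMpos.ne'
    · exact h
  have hprododd : ¬ 2 ∣ ∏ p ∈ S, (f p / 2^α) := by
    intro hd
    rw [Nat.Prime.prime Nat.prime_two |>.dvd_finset_prod_iff _] at hd
    obtain ⟨p, hp, hd⟩ := hd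
    exact hquotodd p hp hd
  have hMv : M.factorization 2 = α := by
    rw [hM, Nat.factorization_mul (by positivity) hprodpos.ne']
    simp only [Finsupp.coe_add, Pi.add_apply]
    rw [Nat.Prime.factorization_pow Nat.prime_two]
    rw [Nat.factorization_eq_zero_of_not_dvd hprododd]
    simp
  have hLv : L.factorization 2 = α := by
    obtain ⟨p0, hp0⟩ := hS
    have h1 : α ≤ L.factorization 2 := by
      have hd : f p0 ∣ L := Finset.dvd_lcm hp0
      have := (Nat.factorization_le_iff_dvd (hf p0 hp0).ne' hLpos.ne').mpr hd 2
      rw [hv p0 hp0] at this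
      exact this
    have h2 : L.factorization 2 ≤ α := by
      have := (Nat.factorization_le_iff_dvd hLpos.ne' hMpos.ne').mpr hLM 2
      omega
    omega
  refine ⟨hLpos, hLv, ?_⟩
  intro p hp
  have hd : f p ∣ L := Finset.dvd_lcm hp
  obtain ⟨q, hq⟩ := hd
  have h2L : 2^α ∣ f p := by
    rw [← hsplit p hp]; exact Dvd.intro _ rfl
  have : L / 2^α = (f p / 2^α) * q := by
    rw [hq]
    calc f p * q / 2^α = 2^α * ((f p / 2^α) * q) / 2^α := by
          rw [← mul_assoc, hsplit p hp]
    _ = (f p / 2^α) * q := Nat.mul_div_cancel_left _ (by positivity)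
  rw [this]
  exact Dvd.intro _ rfl



lemma aux_solve (k T α L' : ℕ) (hT : T < k) (hα : 0 < α) (hL' : 0 < L') (hL'odd : ¬ 2 ∣ L') :
    (∃ s : ℕ, 0 < s ∧ (k*s+T).factorization 2 + 1 = α ∧ L' ∣ k*s+T) ↔
      (T ≡ 2^(α-1) [MOD 2^(min α (k.factorization 2))] ∧
        Nat.gcd (k / 2^(k.factorization 2)) L' ∣ T) := by
  have hk : 0 < k := by omega
  set v := k.factorization 2 with hv
  set k' := k / 2^v with hk'
  have hkk : 2^v * k' = k := Nat.ordProj_mul_ordCompl_eq_self k 2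
  have hk'odd : ¬ 2 ∣ k' := Nat.not_dvd_ordCompl Nat.prime_two hk.ne'
  have hk'pos : 0 < k' := Nat.ordCompl_pos 2 hk.ne'
  have h2v : (2:ℕ)^v ∣ k := Nat.ordProj_dvd k 2
  have hpowlt : (2:ℕ)^(α-1) < 2^α := Nat.pow_lt_pow_right one_lt_two (by omega)
  constructor
  · rintro ⟨s, hs, hval, hdvd⟩
    set n := k*s+T with hn
    have hnpos : 0 < n := by positivity
    have hmod : n % 2^α = 2^(α-1) := (aux_v2_mod n α hnpos hα).mp hval
    constructor
    · have h1 : T ≡ n [MOD 2^(min α v)] := by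
        have : (2:ℕ)^(min α v) ∣ k * s :=
          dvd_mul_of_dvd_left (dvd_trans (pow_dvd_pow 2 (min_le_right α v)) h2v) s
        exact (Nat.modEq_iff_dvd' (by omega)).mpr (by simpa [hn] using this)
      have h2 : n ≡ 2^(α-1) [MOD 2^(min α v)] := by
        have hn2 : n ≡ 2^(α-1) [MOD 2^α] := by
          show n % 2^α = 2^(α-1) % 2^α
          rw [hmod, Nat.mod_eq_of_lt hpowlt]
        exact Nat.ModEq.of_dvd (pow_dvd_pow 2 (min_le_left α v)) hn2
      exact h1.trans h2
    · have hg1 : Nat.gcd k' L' ∣ k * s :=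
        dvd_mul_of_dvd_left (dvd_trans (Nat.gcd_dvd_left _ _) (Dvd.intro_left _ hkk)) s
      have hg2 : Nat.gcd k' L' ∣ n := dvd_trans (Nat.gcd_dvd_right _ _) hdvd
      have := Nat.dvd_sub hg2 hg1
      simpa [hn] using this
  · rintro ⟨hmod, hgcd⟩
    set M₂ := 2^(max α v) with hM₂
    have hM₂pos : 0 < M₂ := by positivity
    set r₂ : ℕ := if α ≤ v then T else 2^(α-1) with hr₂
    set g := Nat.gcd k' L' with hg
    obtain ⟨Y₁, hY₁⟩ : ∃ Y₁ : ℤ, (k':ℤ) ∣ (L':ℤ) * Y₁ - T := by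
      have hbez : (g:ℤ) = k' * Nat.gcdA k' L' + L' * Nat.gcdB k' L' := Nat.gcd_eq_gcd_ab k' L'
      obtain ⟨T₀, hT₀⟩ := hgcd
      refine ⟨Nat.gcdB k' L' * T₀, ⟨-(Nat.gcdA k' L' * T₀), ?_⟩⟩
      have hTg : (T:ℤ) = (g:ℤ) * T₀ := by exact_mod_cast hT₀
      rw [hTg, hbez]; ring
    obtain ⟨Y₂, hY₂⟩ : ∃ Y₂ : ℤ, (M₂:ℤ) ∣ (L':ℤ) * Y₂ - r₂ := by
      have hcop : Nat.Coprime M₂ L' := Nat.Coprime.pow_left _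
        ((Nat.Prime.coprime_iff_not_dvd Nat.prime_two).mpr hL'odd)
      obtain ⟨u, w, huw⟩ := Nat.isCoprime_iff_coprime.mpr hcop
      refine ⟨w * r₂, ⟨-(u * r₂), ?_⟩⟩
      have hiden : (L':ℤ) * (w * r₂) - r₂
          = r₂ * (u * M₂ + w * L') - r₂ - u * M₂ * r₂ := by ring
      rw [hiden, huw]; ring
    have hcop2 : Nat.Coprime k' M₂ := (Nat.Coprime.pow_right _
      ((Nat.Prime.coprime_iff_not_dvd Nat.prime_two).mpr hk'odd).symm)
    obtain ⟨c, e, hce⟩ := Nat.isCoprime_iff_coprime.mpr hcop2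
    set Y : ℤ := Y₁ * e * M₂ + Y₂ * c * k' with hY
    set Z : ℤ := L' * Y with hZ
    have hZ1 : (k':ℤ) ∣ Z - T := by
      obtain ⟨w1, hw1⟩ := hY₁
      refine ⟨w1 * e * M₂ + (L' * Y₂ - T) * c, ?_⟩
      have hiden : Z - (T:ℤ) = ((L':ℤ) * Y₁ - T) * e * M₂ + ((L':ℤ) * Y₂ - T) * c * k'
          + T * (c * k' + e * M₂) - T := by rw [hZ, hY]; ring
      rw [hiden, hce, hw1]; ring
    have hZ2 : (M₂:ℤ) ∣ Z - r₂ := by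
      obtain ⟨w2, hw2⟩ := hY₂
      refine ⟨(L' * Y₁ - r₂) * e + w2 * c * k', ?_⟩
      have hiden : Z - (r₂:ℤ) = ((L':ℤ) * Y₁ - r₂) * e * M₂ + ((L':ℤ) * Y₂ - r₂) * c * k'
          + r₂ * (c * k' + e * M₂) - r₂ := by rw [hZ, hY]; ring
      rw [hiden, hce, hw2]; ring
    have hZL : (L':ℤ) ∣ Z := Dvd.intro _ rfl
    set K := k' * M₂ * L' with hK
    have hKpos : 0 < K := by positivity
    set N : ℕ := (Z % K).toNat + K * (T + 1) with hN
    have hZmod : ((Z % K : ℤ)) = ((Z % K).toNat : ℤ) :=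
      (Int.toNat_of_nonneg (Int.emod_nonneg Z (by exact_mod_cast hKpos.ne'))).symm
    have hNZ : (K:ℤ) ∣ (N:ℤ) - Z := by
      have h1 : (K:ℤ) ∣ Z - Z % K := Int.dvd_self_sub_of_emod_eq rfl
      have h2 : (N:ℤ) = Z % K + K * (T+1) := by
        rw [hN]; push_cast; rw [← hZmod]
      have h3 : (N:ℤ) - Z = -(Z - Z % K) + K * (T+1) := by rw [h2]; ring
      rw [h3]
      exact dvd_add (dvd_neg.mpr h1) ⟨T+1, by push_cast; ring⟩
    have hNT : T < N := by
      have : 1 * (T+1) ≤ K * (T+1) := Nat.mul_le_mul_right _ hKpos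
      omega
    have hNk' : (k':ℤ) ∣ (N:ℤ) - T := by
      have h1 : (k':ℤ) ∣ (N:ℤ) - Z := dvd_trans ⟨M₂ * L', by rw [hK]; push_cast; ring⟩ hNZ
      have h2 : (N:ℤ) - T = ((N:ℤ) - Z) + (Z - T) := by ring
      rw [h2]; exact dvd_add h1 hZ1
    have hNM : (M₂:ℤ) ∣ (N:ℤ) - r₂ := by
      have h1 : (M₂:ℤ) ∣ (N:ℤ) - Z := dvd_trans ⟨k' * L', by rw [hK]; push_cast; ring⟩ hNZ
      have h2 : (N:ℤ) - r₂ = ((N:ℤ) - Z) + (Z - r₂) := by ring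
      rw [h2]; exact dvd_add h1 hZ2
    have hNL : L' ∣ N := by
      have h1 : (L':ℤ) ∣ (N:ℤ) - Z := dvd_trans ⟨k' * M₂, by rw [hK]; push_cast; ring⟩ hNZ
      have h2 : (L':ℤ) ∣ (N:ℤ) := by
        have h3 : (N:ℤ) = ((N:ℤ) - Z) + Z := by ring
        rw [h3]; exact dvd_add h1 hZL
      exact_mod_cast h2
    have hNmodM : N ≡ r₂ [MOD M₂] := by
      rw [Nat.modEq_iff_dvd]
      have h2 : (r₂:ℤ) - N = -((N:ℤ) - r₂) := by ring
      rw [h2]; exact dvd_neg.mpr hNM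
    have hNk'' : N ≡ T [MOD k'] := by
      rw [Nat.modEq_iff_dvd]
      have h2 : (T:ℤ) - N = -((N:ℤ) - T) := by ring
      rw [h2]; exact dvd_neg.mpr hNk'
    have hNα : N % 2^α = 2^(α-1) := by
      have key : N ≡ 2^(α-1) [MOD 2^α] := by
        rcases le_or_gt α v with hle | hlt
        · have hr : r₂ = T := if_pos hle
          have hM : M₂ = 2^v := by rw [hM₂, max_eq_right hle]
          have h1 : N ≡ T [MOD 2^α] := by
            refine Nat.ModEq.of_dvd (pow_dvd_pow 2 hle) ?_
            rw [← hM]; rw [hr] at hNmodM; exact hNmodM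
          have h2 : T ≡ 2^(α-1) [MOD 2^α] := by
            have := hmod; rwa [min_eq_left hle] at this
          exact h1.trans h2
        · have hr : r₂ = 2^(α-1) := if_neg (by omega)
          have hM : M₂ = 2^α := by rw [hM₂, max_eq_left (by omega)]
          rw [hr, hM] at hNmodM; exact hNmodM
      have := key
      unfold Nat.ModEq at this
      rw [this, Nat.mod_eq_of_lt hpowlt]
    have hNv : N ≡ T [MOD 2^v] := by
      rcases le_or_gt α v with hle | hlt
      · have hr : r₂ = T := if_pos hle
        have hM : M₂ = 2^v := by rw [hM₂, max_eq_right hle]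
        rw [hr, hM] at hNmodM; exact hNmodM
      · have h1 : N ≡ 2^(α-1) [MOD 2^v] := by
          refine Nat.ModEq.of_dvd (pow_dvd_pow 2 hlt.le) ?_
          show N % 2^α = 2^(α-1) % 2^α
          rw [hNα, Nat.mod_eq_of_lt hpowlt]
        have h2 : T ≡ 2^(α-1) [MOD 2^v] := by
          have := hmod; rwa [min_eq_right (by omega : v ≤ α)] at this
        exact h1.trans h2.symm
    have hNk : N ≡ T [MOD k] := by
      rw [← hkk]
      have hcopvk : Nat.Coprime (2^v) k' := Nat.Coprime.pow_left _
        ((Nat.Prime.coprime_iff_not_dvd Nat.prime_two).mpr hk'odd)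
      exact (Nat.modEq_and_modEq_iff_modEq_mul hcopvk).mp ⟨hNv, hNk''⟩
    have hdvdk : k ∣ N - T := (Nat.modEq_iff_dvd' hNT.le).mp hNk.symm
    obtain ⟨s, hs⟩ := hdvdk
    have hspos : 0 < s := by
      rcases Nat.eq_zero_or_pos s with h0 | h
      · rw [h0] at hs; omega
      · exact h
    have hNks : k*s + T = N := by omega
    refine ⟨s, hspos, ?_, ?_⟩
    · rw [hNks]; exact (aux_v2_mod N α (by omega) hα).mpr hNα
    · rw [hNks]; exact hNL


lemma aux_local (m : ℕ) (a b : ℤ) (hub : IsUnit ((b : ZMod m))) (n : ℕ) :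
    (m:ℤ) ∣ a^n + b^n ↔ ((a : ZMod m) * (b : ZMod m)⁻¹)^n = -1 := by
  set A := (a : ZMod m) with hA
  set B := (b : ZMod m) with hB
  have h1 : B * B⁻¹ = 1 := ZMod.mul_inv_of_unit B hub
  have hBn : B^n * (B⁻¹)^n = 1 := by rw [← mul_pow, h1, one_pow]
  have hcast : (m:ℤ) ∣ a^n + b^n ↔ A^n + B^n = 0 := by
    rw [← ZMod.intCast_zmod_eq_zero_iff_dvd]
    push_cast
    rfl
  rw [hcast]
  constructor
  · intro h
    linear_combination ((B⁻¹)^n) * h - hBn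
  · intro h
    linear_combination (B^n) * h - A^n * hBn

lemma aux_dvd_iff (d : ℕ) (hd0 : d ≠ 0) (z : ℤ) :
    (d:ℤ) ∣ z ↔ ∀ p ∈ d.primeFactors, ((p:ℤ)^(d.factorization p)) ∣ z := by
  constructor
  · intro h p hp
    refine dvd_trans ?_ h
    have := Nat.ordProj_dvd d p
    exact_mod_cast this
  · intro h
    have hprod : ∏ p ∈ d.primeFactors, (p:ℤ)^(d.factorization p) = (d:ℤ) := by
      have h1 : d.factorization.prod (fun p e => p ^ e) = d :=
        Nat.factorization_prod_pow_eq_self hd0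
      have h2 : ∏ p ∈ d.primeFactors, p^(d.factorization p) = d := by
        rw [← Nat.prod_factorization_eq_prod_primeFactors (f := fun p e => p ^ e)]
        exact h1
      exact_mod_cast congrArg (Nat.cast : ℕ → ℤ) h2
    rw [← hprod]
    apply Finset.prod_dvd_of_coprime
    · intro p hp q hq hne
      have hpp := Nat.prime_of_mem_primeFactors (by simpa using hp)
      have hqq := Nat.prime_of_mem_primeFactors (by simpa using hq)
      have hcop : Nat.Coprime (p^(d.factorization p)) (q^(d.factorization q)) :=
        Nat.Coprime.pow _ _ ((Nat.coprime_primes hpp hqq).mpr hne)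
      have := Nat.isCoprime_iff_coprime.mpr hcop
      simp only [Function.onFun]
      push_cast at this ⊢
      exact this
    · exact fun p hp => h p hp

/-- global 2-adic characterization of odd `(T,k)`-good integers. -/
theorem stmt_6 (a b : ℤ) (ha : a ≠ 0) (hb : b ≠ 0) (hab : IsCoprime a b)
    (d : ℕ) (hd1 : 1 < d) (hd : Odd d) (hdab : IsCoprime (d : ℤ) (a * b))
    (k T : ℕ) (hT : T < k) :
    (∃ s : ℕ, 0 < s ∧ (d : ℤ) ∣ a ^ (k * s + T) + b ^ (k * s + T)) ↔
      ∃ α : ℕ, 0 < α ∧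
        (∀ p ∈ d.primeFactors,
          padicValNat 2 (orderOf ((a : ZMod p) * (b : ZMod p)⁻¹)) = α) ∧
        T ≡ 2 ^ (α - 1) [MOD 2 ^ (min α (padicValNat 2 k))] ∧
        Nat.gcd (k / 2 ^ (padicValNat 2 k))
          ((d.primeFactors.lcm fun p =>
            orderOf ((a : ZMod (p ^ (d.factorization p))) *
              (b : ZMod (p ^ (d.factorization p)))⁻¹)) / 2 ^ α) ∣ T := by
  have hd0 : d ≠ 0 := by omega
  set S := d.primeFactors with hS
  have hSne : S.Nonempty := Nat.nonempty_primeFactors.mpr hd1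
  set F : ℕ → ℕ := fun p =>
    orderOf ((a : ZMod (p ^ (d.factorization p))) * (b : ZMod (p ^ (d.factorization p)))⁻¹)
    with hF
  set G : ℕ → ℕ := fun p => orderOf ((a : ZMod p) * (b : ZMod p)⁻¹) with hG
  -- basic facts about primes of d
  have hprime : ∀ p ∈ S, p.Prime := fun p hp => Nat.prime_of_mem_primeFactors hp
  have hp2 : ∀ p ∈ S, p ≠ 2 := by
    intro p hp hpe
    have hpd : p ∣ d := Nat.dvd_of_mem_primeFactors hp
    rw [hpe] at hpd
    rw [Nat.odd_iff] at hd
    omega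
  have he : ∀ p ∈ S, 0 < d.factorization p := by
    intro p hp
    have hpd : p ∈ d.primeFactors := by rwa [hS] at hp
    have : d.factorization p ≠ 0 := by
      rw [← Nat.support_factorization] at hpd
      exact Finsupp.mem_support_iff.mp hpd
    omega
  have hm1 : ∀ p ∈ S, 1 < p ^ d.factorization p := by
    intro p hp
    calc 1 < p := (hprime p hp).one_lt
    _ = p^1 := (pow_one p).symm
    _ ≤ p ^ d.factorization p := Nat.pow_le_pow_right (hprime p hp).pos (he p hp)
  -- units
  have hcop : ∀ p ∈ S, IsCoprime (((p ^ d.factorization p : ℕ) : ℤ)) (a * b) := by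
    intro p hp
    refine IsCoprime.of_isCoprime_of_dvd_left hdab ?_
    exact_mod_cast Int.natCast_dvd_natCast.mpr (Nat.ordProj_dvd d p)
  have hua : ∀ p ∈ S, IsUnit ((a : ZMod (p ^ d.factorization p))) :=
    fun p hp => aux_isUnit _ a ((hcop p hp).of_mul_right_left)
  have hub : ∀ p ∈ S, IsUnit ((b : ZMod (p ^ d.factorization p))) :=
    fun p hp => aux_isUnit _ b ((hcop p hp).of_mul_right_right)
  have hxu : ∀ p ∈ S,
      IsUnit ((a : ZMod (p ^ d.factorization p)) * (b : ZMod (p ^ d.factorization p))⁻¹) :=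
    fun p hp => (hua p hp).mul
      (IsUnit.of_mul_eq_one _ (ZMod.inv_mul_of_unit _ (hub p hp)))
  have hFpos : ∀ p ∈ S, 0 < F p := fun p hp => aux_order_pos _ (hm1 p hp) _ (hxu p hp)
  have hv2 : ∀ p ∈ S, (F p).factorization 2 = (G p).factorization 2 :=
    fun p hp => aux_v2_order p (d.factorization p) (hprime p hp) (hp2 p hp) (he p hp)
      a b (hua p hp) (hub p hp)
  -- main per-prime characterization
  have hmain : ∀ n : ℕ, 0 < n →
      ((d : ℤ) ∣ a ^ n + b ^ n ↔ ∀ p ∈ S, (F p ∣ 2*n ∧ ¬ F p ∣ n)) := by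
    intro n hn
    rw [aux_dvd_iff d hd0]
    refine forall_congr' fun p => imp_congr_right fun hp => ?_
    have hloc := aux_local (p ^ d.factorization p) a b (hub p hp) n
    have hcast : (((p ^ d.factorization p : ℕ)) : ℤ) = (p:ℤ) ^ (d.factorization p) := by
      push_cast; rfl
    rw [hcast] at hloc
    exact hloc.trans
      (aux_pow_neg_one p (d.factorization p) (hprime p hp) (hp2 p hp) (he p hp)
        _ (hxu p hp) n)
  have hk0 : 0 < k := by omega
  constructor
  · rintro ⟨s, hs, hdvd⟩
    set n := k*s+T with hn
    have hnpos : 0 < n := by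
      have : 1*1 ≤ k*s := Nat.mul_le_mul hk0 hs
      omega
    have hper := (hmain n hnpos).mp hdvd
    have hkey : ∀ p ∈ S, (F p).factorization 2 = n.factorization 2 + 1 ∧
        F p / 2^((F p).factorization 2) ∣ n :=
      fun p hp => (aux_key_t (F p) n (hFpos p hp) hnpos).mp (hper p hp)
    set α := n.factorization 2 + 1 with hα
    have hvF : ∀ p ∈ S, (F p).factorization 2 = α := fun p hp => (hkey p hp).1
    obtain ⟨hLpos, hLv, hLq⟩ := aux_lcm S hSne F α hFpos hvF
    set L := S.lcm F with hL
    set L' := L / 2^α with hL'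
    have hL'odd : ¬ 2 ∣ L' := by
      have := Nat.not_dvd_ordCompl Nat.prime_two hLpos.ne'
      rwa [hLv] at this
    have hL'pos : 0 < L' := by
      have := Nat.ordCompl_pos 2 hLpos.ne'
      rwa [hLv] at this
    have hLdvd : L ∣ 2*n := Finset.lcm_dvd (fun p hp => (hper p hp).1)
    have hL'n : L' ∣ n := by
      have h1 : L' ∣ 2*n := by
        refine dvd_trans ?_ hLdvd
        have := Nat.ordCompl_dvd L 2
        rwa [hLv] at this
      exact (((Nat.Prime.coprime_iff_not_dvd Nat.prime_two).mpr hL'odd).symm).dvd_of_dvd_mul_left h1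
    obtain ⟨hc2, hc3⟩ := (aux_solve k T α L' hT (by omega) hL'pos hL'odd).mp
      ⟨s, hs, by rw [← hn, hα], by rw [← hn]; exact hL'n⟩
    refine ⟨α, by omega, ?_, ?_, ?_⟩
    · intro p hp
      rw [← Nat.factorization_def _ Nat.prime_two, ← hv2 p hp]
      exact hvF p hp
    · rwa [← Nat.factorization_def k Nat.prime_two]
    · rwa [← Nat.factorization_def k Nat.prime_two]
  · rintro ⟨α, hαpos, hord, hc2, hc3⟩
    have hord' : ∀ p ∈ S, (G p).factorization 2 = α := by
      intro p hp
      rw [Nat.factorization_def _ Nat.prime_two]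
      exact hord p hp
    have hvF : ∀ p ∈ S, (F p).factorization 2 = α :=
      fun p hp => (hv2 p hp).trans (hord' p hp)
    obtain ⟨hLpos, hLv, hLq⟩ := aux_lcm S hSne F α hFpos hvF
    set L := S.lcm F with hL
    set L' := L / 2^α with hL'
    have hL'odd : ¬ 2 ∣ L' := by
      have := Nat.not_dvd_ordCompl Nat.prime_two hLpos.ne'
      rwa [hLv] at this
    have hL'pos : 0 < L' := by
      have := Nat.ordCompl_pos 2 hLpos.ne'
      rwa [hLv] at this
    rw [← Nat.factorization_def k Nat.prime_two] at hc2 hc3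
    obtain ⟨s, hs, hval, hL'n⟩ := (aux_solve k T α L' hT (by omega) hL'pos hL'odd).mpr ⟨hc2, hc3⟩
    set n := k*s+T with hn
    have hnpos : 0 < n := by
      have : 1*1 ≤ k*s := Nat.mul_le_mul hk0 hs
      omega
    refine ⟨s, hs, (hmain n hnpos).mpr ?_⟩
    intro p hp
    refine (aux_key_t (F p) n (hFpos p hp) hnpos).mpr ⟨?_, ?_⟩
    · rw [hvF p hp]; omega
    · rw [hvF p hp]
      exact dvd_trans (hLq p hp) hL'n
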